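/- Let polytopes P_i ⊂ ℝ^d with Minkowski sum M satisfy the required-flexibility and projection-feasibility assumptions, and let A = Conv({v^j : j ∈ {-1,1}^d}). If v^j = t·p + (1-t)·q with p, q ∈ M and t ∈ (0,1), then p ∈ A and q ∈ A. -/

import Mathlib

/-- Projection of `x` onto its first `t` components, padded with zeros. -/
def proj (d : ℕ) (t : ℕ) (x : Fin d → ℝ) : Fin d → ℝ :=
  fun s => if (s : ℕ) < t then x s else 0

/-- A polytope is a bounded polyhedron `{x : A x ≤ b}`. -/
def IsPolytope {d : ℕ} (P : Set (Fin d → ℝ)) : Prop :=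
  ∃ (k : ℕ) (A : Matrix (Fin k) (Fin d) ℝ) (b : Fin k → ℝ),
    P = {x | ∀ i, A.mulVec x i ≤ b i} ∧ Bornology.IsBounded P

/-- Assumption 2 (projection feasibility). -/
def ProjFeas {d : ℕ} (P : Set (Fin d → ℝ)) : Prop :=
  (0 : Fin d → ℝ) ∈ P ∧ ∀ x ∈ P, ∀ t : ℕ, 1 ≤ t → t ≤ d - 1 → proj d t x ∈ P

/-- Assumption 1 (required flexibility). -/
def ReqFlex {d : ℕ} (P : Set (Fin d → ℝ)) : Prop :=
  ∀ (x : Fin d → ℝ) (t : Fin d), proj d (t : ℕ) x ∈ P →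
    ∃ ε : ℝ, ε ≠ 0 ∧ Function.update (proj d (t : ℕ) x) t ε ∈ P

/-- Sign vectors `j ∈ {-1, 1}^d`. -/
def IsSign {d : ℕ} (j : Fin d → ℝ) : Prop := ∀ t, j t = 1 ∨ j t = -1

/-- `y` is the extreme action of `P` in direction `j` (Definition 1):
`y_t = j_t · max { j_t · x : (y_1, …, y_{t-1}, x, 0, …, 0) ∈ P }`. -/
def IsExtremeAction {d : ℕ} (P : Set (Fin d → ℝ)) (j y : Fin d → ℝ) : Prop :=
  ∀ t : Fin d,
    IsGreatest
      {z : ℝ | ∃ x : ℝ, Function.update (proj d (t : ℕ) y) t x ∈ P ∧ z = j t * x}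
      (j t * y t)

/-- Minkowski sum of the sets `P i`. -/
def MinkSum {d n : ℕ} (P : Fin n → Set (Fin d → ℝ)) : Set (Fin d → ℝ) :=
  {x | ∃ f : Fin n → Fin d → ℝ, (∀ i, f i ∈ P i) ∧ x = ∑ i, f i}

theorem proper_convex_combination_in_approximation {d n : ℕ}
    (P : Fin n → Set (Fin d → ℝ))
    (hpoly : ∀ i, IsPolytope (P i))
    (hA1 : ∀ i, ReqFlex (P i)) (hA2 : ∀ i, ProjFeas (P i))
    (v : (Fin d → ℝ) → Fin d → ℝ)
    (hv : ∀ j, IsSign j → ∃ y : Fin n → Fin d → ℝ,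
      (∀ i, IsExtremeAction (P i) j (y i)) ∧ v j = ∑ i, y i)
    (k : Fin d → ℝ) (hk : IsSign k)
    (p q : Fin d → ℝ) (hp : p ∈ MinkSum P) (hq : q ∈ MinkSum P)
    (t : ℝ) (ht : t ∈ Set.Ioo (0 : ℝ) 1)
    (hcomb : v k = t • p + (1 - t) • q) :
    p ∈ convexHull ℝ (v '' {j | IsSign j}) ∧
    q ∈ convexHull ℝ (v '' {j | IsSign j}) := by
  obtain ⟨ht0, ht1⟩ := ht
  obtain ⟨y, hy, hvk⟩ := hv k hk
  obtain ⟨f, hf, hpf⟩ := hp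
  obtain ⟨g, hg, hqf⟩ := hq
  have hk0 : ∀ s, k s ≠ 0 := by
    intro s; rcases hk s with h | h <;> rw [h] <;> norm_num
  -- key: f and g both agree with y on all coordinates
  have key : ∀ m : ℕ, m ≤ d → ∀ i, ∀ s : Fin d, (s : ℕ) < m →
      f i s = y i s ∧ g i s = y i s := by
    intro m
    induction m with
    | zero => intro _ i s hs; omega
    | succ m ih =>
      intro hm i0 s hs
      have hmd : m < d := hm
      have ihm := ih (le_of_lt hmd)
      rcases Nat.lt_or_ge (s : ℕ) m with h | h
      · exact ihm i0 s h
      have hsm : (s : ℕ) = m := by omega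
      set T : Fin d := ⟨m, hmd⟩ with hT
      have hsT : s = T := Fin.ext hsm
      -- projections of f i, g i, y i up to m agree
      have projf : ∀ i, proj d m (f i) = proj d m (y i) := by
        intro i; funext u; simp only [proj]
        by_cases hu : (u : ℕ) < m
        · simp [hu, (ihm i u hu).1]
        · simp [hu]
      have projg : ∀ i, proj d m (g i) = proj d m (y i) := by
        intro i; funext u; simp only [proj]
        by_cases hu : (u : ℕ) < m
        · simp [hu, (ihm i u hu).2]
        · simp [hu]
      -- update identity
      have upd : ∀ w : Fin d → ℝ,
          Function.update (proj d m w) T (w T) = proj d (m + 1) w := by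
        intro w; funext u
        rcases eq_or_ne u T with hu | hu
        · subst hu; simp [proj, hT]
        · have hum : (u : ℕ) ≠ m := fun hc => hu (Fin.ext hc)
          have : ((u : ℕ) < m) ↔ ((u : ℕ) < m + 1) := by omega
          simp [Function.update_apply, hu, proj, this]
      -- membership of truncations
      have memproj : ∀ (w : Fin d → ℝ), (∀ i, w ∈ P i → proj d (m + 1) w ∈ P i) := by
        intro w i hw
        rcases eq_or_lt_of_le (Nat.succ_le_of_lt hmd) with hd | hd
        · have : proj d (m + 1) w = w := by
            funext u; simp only [proj]
            have : (u : ℕ) < m + 1 := by omega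
            simp [this]
          rwa [this]
        · exact (hA2 i).2 w hw (m + 1) (by omega) (by omega)
      -- inequalities from extremality
      have hfle : ∀ i, k T * f i T ≤ k T * y i T := by
        intro i
        have hmem : Function.update (proj d (T : ℕ) (y i)) T (f i T) ∈ P i := by
          have : (T : ℕ) = m := rfl
          rw [this, ← projf i, upd (f i)]
          exact memproj (f i) i (hf i)
        exact (hy i T).2 ⟨f i T, hmem, rfl⟩
      have hgle : ∀ i, k T * g i T ≤ k T * y i T := by
        intro i
        have hmem : Function.update (proj d (T : ℕ) (y i)) T (g i T) ∈ P i := by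
          have : (T : ℕ) = m := rfl
          rw [this, ← projg i, upd (g i)]
          exact memproj (g i) i (hg i)
        exact (hy i T).2 ⟨g i T, hmem, rfl⟩
      -- coordinate T of the convex combination
      have hpT : p T = ∑ i, f i T := by rw [hpf]; simp
      have hqT : q T = ∑ i, g i T := by rw [hqf]; simp
      have hvT : v k T = ∑ i, y i T := by rw [hvk]; simp
      have hcombT : v k T = t * p T + (1 - t) * q T := by
        have := congrFun hcomb T
        simpa using this
      have hA : ∑ i, k T * f i T ≤ ∑ i, k T * y i T :=
        Finset.sum_le_sum fun i _ => hfle i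
      have hB : ∑ i, k T * g i T ≤ ∑ i, k T * y i T :=
        Finset.sum_le_sum fun i _ => hgle i
      have hApT : k T * p T = ∑ i, k T * f i T := by rw [hpT, Finset.mul_sum]
      have hBqT : k T * q T = ∑ i, k T * g i T := by rw [hqT, Finset.mul_sum]
      have hCvT : k T * v k T = ∑ i, k T * y i T := by rw [hvT, Finset.mul_sum]
      have hAeq : k T * p T = k T * v k T ∧ k T * q T = k T * v k T := by
        have h1 : k T * p T ≤ k T * v k T := by rw [hApT, hCvT]; exact hA
        have h2 : k T * q T ≤ k T * v k T := by rw [hBqT, hCvT]; exact hB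
        have h3 : k T * v k T = t * (k T * p T) + (1 - t) * (k T * q T) := by
          rw [hcombT]; ring
        constructor <;> nlinarith [h1, h2]
      -- per-summand equality
      have hsumf : ∑ i, (k T * y i T - k T * f i T) = 0 := by
        rw [Finset.sum_sub_distrib, ← hCvT, ← hApT, hAeq.1]; ring
      have hsumg : ∑ i, (k T * y i T - k T * g i T) = 0 := by
        rw [Finset.sum_sub_distrib, ← hCvT, ← hBqT, hAeq.2]; ring
      have hfeq : k T * f i0 T = k T * y i0 T := by
        have := (Finset.sum_eq_zero_iff_of_nonneg
          (fun i _ => by linarith [hfle i])).mp hsumf i0 (Finset.mem_univ i0)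
        linarith
      have hgeq : k T * g i0 T = k T * y i0 T := by
        have := (Finset.sum_eq_zero_iff_of_nonneg
          (fun i _ => by linarith [hgle i])).mp hsumg i0 (Finset.mem_univ i0)
        linarith
      rw [hsT]
      exact ⟨mul_left_cancel₀ (hk0 T) hfeq, mul_left_cancel₀ (hk0 T) hgeq⟩
  have hfy : ∀ i, f i = y i := fun i => funext fun s => (key d le_rfl i s s.isLt).1
  have hgy : ∀ i, g i = y i := fun i => funext fun s => (key d le_rfl i s s.isLt).2
  have hpv : p = v k := by
    rw [hpf, hvk]; exact Finset.sum_congr rfl fun i _ => hfy i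
  have hqv : q = v k := by
    rw [hqf, hvk]; exact Finset.sum_congr rfl fun i _ => hgy i
  have hmem : v k ∈ convexHull ℝ (v '' {j | IsSign j}) :=
    subset_convexHull ℝ _ ⟨k, hk, rfl⟩
  exact ⟨hpv ▸ hmem, hqv ▸ hmem⟩
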